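/- Let Z ~ Exp(λ) with λ > 0, and let F > 0. Then E[1/(F + Z)²] = λ·(1/F − λ·e^{λF}·∫_{λF}^∞ (e^{−t}/t) dt), and consequently E[1/(F + Z)²] ≤ (λ²F + 2λ)/(λ²F³ + 4λF² + 2F). -/

import Mathlib

open MeasureTheory ProbabilityTheory Real Set Filter Topology
open scoped ENNReal NNReal

lemma step1 (l F : ℝ) (hl : 0 < l) (hF : 0 < F) :
    (∫ x, 1 / (F + x) ^ 2 ∂(expMeasure l)) =
      l * ∫ x in Ioi (0:ℝ), Real.exp (-(l*x)) / (F + x) ^ 2 := by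
  have hm : expMeasure l = volume.withDensity
      (fun x => ((gammaPDFReal 1 l x).toNNReal : ℝ≥0∞)) := rfl
  rw [hm, integral_withDensity_eq_integral_smul (measurable_gammaPDFReal 1 l).real_toNNReal]
  rw [← setIntegral_eq_integral_of_ae_compl_eq_zero (s := Ioi (0:ℝ)) ?_]
  · rw [← integral_const_mul]
    refine setIntegral_congr_fun measurableSet_Ioi fun x hx => ?_
    have hx0 : (0:ℝ) < x := hx
    have hpdf : gammaPDFReal 1 l x = l * Real.exp (-(l*x)) := by
      simp [gammaPDFReal, hx0.le, Real.Gamma_one]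
    have hnn : 0 ≤ l * Real.exp (-(l*x)) := by positivity
    rw [NNReal.smul_def, Real.coe_toNNReal _ (hpdf ▸ hnn), hpdf]
    have : F + x ≠ 0 := by positivity
    rw [smul_eq_mul]
    field_simp
  · have h0 : ∀ᵐ (x:ℝ), x ≠ (0:ℝ) := by
      refine ae_iff.mpr ?_
      simp
    filter_upwards [h0] with x hx0 hx
    have hneg : x < 0 := lt_of_le_of_ne (not_lt.mp hx) hx0
    have : gammaPDFReal 1 l x = 0 := by simp [gammaPDFReal, not_le.mpr hneg]
    simp [this]


lemma myIntegrableOn_of_bound {a b C : ℝ} (hb : 0 < b) {h : ℝ → ℝ}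
    (hc : ContinuousOn h (Ioi a)) (hbd : ∀ x ∈ Ioi a, |h x| ≤ C * Real.exp (-(b*x))) :
    IntegrableOn h (Ioi a) := by
  refine Integrable.mono' ((exp_neg_integrableOn_Ioi a hb).const_mul C)
    (hc.aestronglyMeasurable measurableSet_Ioi) ?_
  filter_upwards [ae_restrict_mem measurableSet_Ioi] with x hx
  simpa [neg_mul] using hbd x hx

section
variable {l F : ℝ}

lemma contOn1 (hF : 0 < F) : ContinuousOn (fun x => Real.exp (-(l*x)) / (F + x)) (Ioi 0) := by
  apply ContinuousOn.div
  · exact (Real.continuous_exp.comp (continuous_const.mul continuous_id).neg).continuousOn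
  · exact (continuous_const.add continuous_id).continuousOn
  · intro x hx; have : (0:ℝ) < x := hx; positivity

lemma contOn2 (hF : 0 < F) : ContinuousOn (fun x => Real.exp (-(l*x)) / (F + x)^2) (Ioi 0) := by
  apply ContinuousOn.div
  · exact (Real.continuous_exp.comp (continuous_const.mul continuous_id).neg).continuousOn
  · exact ((continuous_const.add continuous_id).pow 2).continuousOn
  · intro x hx; have : (0:ℝ) < x := hx; positivity

lemma intOn1 (hl : 0 < l) (hF : 0 < F) :
    IntegrableOn (fun x => Real.exp (-(l*x)) / (F + x)) (Ioi 0) := by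
  refine myIntegrableOn_of_bound (C := F⁻¹) hl (contOn1 hF) fun x hx => ?_
  have hx0 : (0:ℝ) < x := hx
  rw [abs_of_nonneg (by positivity), ← div_eq_inv_mul]
  exact div_le_div_of_nonneg_left (Real.exp_pos _).le hF (by linarith)

lemma intOn2 (hl : 0 < l) (hF : 0 < F) :
    IntegrableOn (fun x => Real.exp (-(l*x)) / (F + x)^2) (Ioi 0) := by
  refine myIntegrableOn_of_bound (C := (F^2)⁻¹) hl (contOn2 hF) fun x hx => ?_
  have hx0 : (0:ℝ) < x := hx
  rw [abs_of_nonneg (by positivity), ← div_eq_inv_mul]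
  exact div_le_div_of_nonneg_left (Real.exp_pos _).le (by positivity) (by nlinarith)

lemma step2 (hl : 0 < l) (hF : 0 < F) :
    ∫ x in Ioi (0:ℝ), Real.exp (-(l*x)) / (F + x)^2 =
      1 / F - l * ∫ x in Ioi (0:ℝ), Real.exp (-(l*x)) / (F + x) := by
  have key : ∫ x in Ioi (0:ℝ),
      (l * (Real.exp (-(l*x)) / (F + x)) + Real.exp (-(l*x)) / (F + x)^2) = 1 / F := by
    have hftc := integral_Ioi_of_hasDerivAt_of_tendsto (a := 0) (m := 0)
      (f := fun x => -(Real.exp (-(l*x)) / (F + x)))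
      (f' := fun x => l * (Real.exp (-(l*x)) / (F + x)) + Real.exp (-(l*x)) / (F + x)^2)
      ?_ ?_ ?_ ?_
    · rw [hftc]; field_simp; simp
    · -- continuity at 0 within Ici 0
      apply ContinuousAt.continuousWithinAt
      have : ContinuousAt (fun x => Real.exp (-(l*x)) / (F + x)) 0 := by
        apply ContinuousAt.div
        · exact (Real.continuous_exp.comp (continuous_const.mul continuous_id).neg).continuousAt
        · exact (continuous_const.add continuous_id).continuousAt
        · simpa using hF.ne'
      exact this.neg
    · intro x hx
      have hx0 : (0:ℝ) < x := hx
      have hne : F + x ≠ 0 := by positivity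
      have h0 : HasDerivAt (fun x : ℝ => -(l*x)) (-l) x := by
        simpa using ((hasDerivAt_id x).const_mul l).fun_neg
      have h1 := h0.exp
      have h2 : HasDerivAt (fun x : ℝ => F + x) 1 x := by
        simpa using (hasDerivAt_id x).const_add F
      have h3 := (h1.fun_div h2 hne).fun_neg
      convert h3 using 1
      field_simp
      ring
    · exact ((intOn1 hl hF).const_mul l).add (intOn2 hl hF)
    · have t1 : Tendsto (fun x:ℝ => l*x) atTop atTop :=
        Tendsto.const_mul_atTop hl tendsto_id
      have t2 : Tendsto (fun x:ℝ => Real.exp (-(l*x))) atTop (𝓝 0) :=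
        Real.tendsto_exp_neg_atTop_nhds_zero.comp t1
      have t3 : Tendsto (fun x:ℝ => (F+x)⁻¹) atTop (𝓝 0) :=
        tendsto_inv_atTop_zero.comp (tendsto_atTop_add_const_left _ F tendsto_id)
      have := (t2.mul t3).neg
      simpa [div_eq_mul_inv] using this
  rw [integral_add ((intOn1 hl hF).const_mul l) (intOn2 hl hF), integral_const_mul] at key
  linarith

end


lemma step3 {l F : ℝ} (hl : 0 < l) (hF : 0 < F) :
    ∫ x in Ioi (0:ℝ), Real.exp (-(l*x)) / (F + x) =
      Real.exp (l*F) * ∫ t in Ioi (l*F), Real.exp (-t) / t := by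
  have hcomp := integral_comp_mul_left_Ioi (fun t => Real.exp (-t)/t) F hl
  have htrans : ∫ x in Ioi F, Real.exp (-(l*x)) / (l*x) =
      ∫ x in Ioi (0:ℝ), Real.exp (-(l*(x+F))) / (l*(x+F)) := by
    rw [← integral_indicator measurableSet_Ioi, ← integral_indicator measurableSet_Ioi,
      ← integral_add_right_eq_self
        (fun x => (Ioi F).indicator (fun y => Real.exp (-(l*y)) / (l*y)) x) F]
    congr 1
    ext x
    by_cases h : 0 < x
    · rw [indicator_of_mem (mem_Ioi.mpr (by linarith)), indicator_of_mem (mem_Ioi.mpr h)]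
    · rw [indicator_of_notMem (by simp only [mem_Ioi, not_lt] at h ⊢; linarith),
        indicator_of_notMem (by simpa using h)]
  have hpt : ∫ x in Ioi (0:ℝ), Real.exp (-(l*(x+F))) / (l*(x+F)) =
      Real.exp (-(l*F)) * l⁻¹ * ∫ x in Ioi (0:ℝ), Real.exp (-(l*x)) / (F + x) := by
    rw [← integral_const_mul]
    refine setIntegral_congr_fun measurableSet_Ioi fun x hx => ?_
    have hx0 : (0:ℝ) < x := hx
    have h1 : F + x ≠ 0 := by positivity
    rw [show -(l*(x+F)) = -(l*F) + -(l*x) by ring, Real.exp_add]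
    field_simp
    ring
  rw [htrans, hpt, smul_eq_mul] at hcomp
  have hexp : Real.exp (l*F) * Real.exp (-(l*F)) = 1 := by
    rw [← Real.exp_add]; simp
  have hl' : (l:ℝ) ≠ 0 := hl.ne'
  have h2 : Real.exp (-(l*F)) * ∫ x in Ioi (0:ℝ), Real.exp (-(l*x)) / (F + x) =
      ∫ t in Ioi (l*F), Real.exp (-t) / t := by
    field_simp at hcomp
    linarith
  calc ∫ x in Ioi (0:ℝ), Real.exp (-(l*x)) / (F + x)
      = (Real.exp (l*F) * Real.exp (-(l*F))) * ∫ x in Ioi (0:ℝ), Real.exp (-(l*x)) / (F + x) := by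
        rw [hexp, one_mul]
    _ = Real.exp (l*F) * ∫ t in Ioi (l*F), Real.exp (-t) / t := by rw [mul_assoc, h2]

lemma intOnE1 {a : ℝ} (ha : 0 < a) :
    IntegrableOn (fun t => Real.exp (-t) / t) (Ioi a) := by
  refine myIntegrableOn_of_bound (b := 1) (C := a⁻¹) one_pos ?_ fun t ht => ?_
  · exact ContinuousOn.div (Real.continuous_exp.comp continuous_neg).continuousOn
      continuous_id.continuousOn (fun t ht => (ha.trans ht).ne')
  · have h1 : a < t := ht
    have ht0 : (0:ℝ) < t := ha.trans h1
    rw [abs_of_nonneg (by positivity), ← div_eq_inv_mul, one_mul]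
    exact div_le_div_of_nonneg_left (Real.exp_pos _).le ha (le_of_lt h1)

lemma intOnG {a : ℝ} (ha : 0 < a) :
    IntegrableOn (fun t => Real.exp (-t) * (t^3+8*t^2+20*t+16) / (t^2+4*t+2)^2) (Ioi a) := by
  refine myIntegrableOn_of_bound (b := 1) (C := a⁻¹) one_pos ?_ fun t ht => ?_
  · refine ContinuousOn.div
      ((Real.continuous_exp.comp continuous_neg).mul
        (by continuity : Continuous fun t : ℝ => t^3+8*t^2+20*t+16)).continuousOn
      ((by continuity : Continuous fun t : ℝ => t^2+4*t+2).pow 2).continuousOn (fun t ht => ?_)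
    have ht0 : (0:ℝ) < t := ha.trans ht
    positivity
  · have h1 : a < t := ht
    have ht0 : 0 < t := ha.trans h1
    have hD : (0:ℝ) < (t^2+4*t+2)^2 := by positivity
    rw [abs_of_nonneg (by positivity), one_mul, ← div_eq_inv_mul]
    rw [div_le_div_iff₀ hD ha]
    have key : (t^3+8*t^2+20*t+16) * t ≤ (t^2+4*t+2)^2 := by nlinarith
    calc Real.exp (-t) * (t^3+8*t^2+20*t+16) * a ≤ Real.exp (-t) * (t^3+8*t^2+20*t+16) * t := by
          have : (0:ℝ) ≤ Real.exp (-t) * (t^3+8*t^2+20*t+16) := by positivity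
          nlinarith
      _ ≤ Real.exp (-t) * (t^2+4*t+2)^2 := by
          rw [mul_assoc]
          exact mul_le_mul_of_nonneg_left key (Real.exp_pos _).le

lemma ftcG {a : ℝ} (ha : 0 < a) :
    ∫ t in Ioi a, Real.exp (-t) * (t^3+8*t^2+20*t+16) / (t^2+4*t+2)^2 =
      Real.exp (-a) * (a+3) / (a^2+4*a+2) := by
  have hderiv : ∀ t : ℝ, 0 < t →
      HasDerivAt (fun t => -(Real.exp (-t) * (t+3) / (t^2+4*t+2)))
        (Real.exp (-t) * (t^3+8*t^2+20*t+16) / (t^2+4*t+2)^2) t := by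
    intro t ht
    have hD : t^2+4*t+2 ≠ 0 := by positivity
    have h0 : HasDerivAt (fun t : ℝ => -t) (-1) t := (hasDerivAt_id t).neg
    have h1 := h0.exp
    have h2 : HasDerivAt (fun t : ℝ => t+3) 1 t := (hasDerivAt_id t).add_const 3
    have hn := h1.fun_mul h2
    have hd : HasDerivAt (fun t : ℝ => t^2+4*t+2) (2*t+4) t := by
      have := ((hasDerivAt_pow 2 t).add (((hasDerivAt_id t).const_mul 4))).add_const 2
      simpa using this
    have h3 := (hn.fun_div hd hD).fun_neg
    exact h3.congr_deriv (by ring)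
  have hftc := integral_Ioi_of_hasDerivAt_of_tendsto (a := a) (m := 0)
    (f := fun t => -(Real.exp (-t) * (t+3) / (t^2+4*t+2)))
    (f' := fun t => Real.exp (-t) * (t^3+8*t^2+20*t+16) / (t^2+4*t+2)^2)
    ((hderiv a ha).continuousAt.continuousWithinAt)
    (fun t ht => hderiv t (ha.trans ht)) (intOnG ha) ?_
  · rw [hftc]
    have hD : a^2+4*a+2 ≠ 0 := by positivity
    field_simp
    ring
  · rw [show (0:ℝ) = -0 by norm_num]
    apply Tendsto.neg
    apply tendsto_of_tendsto_of_tendsto_of_le_of_le' tendsto_const_nhds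
      Real.tendsto_exp_neg_atTop_nhds_zero
    · filter_upwards [eventually_gt_atTop (0:ℝ)] with t ht
      positivity
    · filter_upwards [eventually_ge_atTop (1:ℝ)] with t ht
      have hD : (0:ℝ) < t^2+4*t+2 := by positivity
      rw [div_le_iff₀ hD]
      nlinarith [Real.exp_pos (-t), (Real.exp_pos (-t)).le]

lemma E1_lower {a : ℝ} (ha : 0 < a) :
    Real.exp (-a) * (a+3) / (a^2+4*a+2) ≤ ∫ t in Ioi a, Real.exp (-t) / t := by
  rw [← ftcG ha]
  refine setIntegral_mono_on (intOnG ha) (intOnE1 ha) measurableSet_Ioi fun t ht => ?_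
  have h1 : a < t := ht
  have ht0 : 0 < t := ha.trans h1
  rw [div_le_div_iff₀ (by positivity) ht0]
  nlinarith [Real.exp_pos (-t), (Real.exp_pos (-t)).le,
    mul_le_mul_of_nonneg_left (show (t^3+8*t^2+20*t+16)*t ≤ (t^2+4*t+2)^2 by nlinarith)
      (Real.exp_pos (-t)).le]


/-- For `Z ~ Exp(l)` (`l > 0`) and `F > 0`:
`E[1/(F+Z)²] = l·(1/F − l·e^{lF}·∫_{lF}^∞ e^{−t}/t dt)` and
`E[1/(F+Z)²] ≤ (l²F + 2l)/(l²F³ + 4lF² + 2F)`. -/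
theorem exp_inv_sq_shift (l F : ℝ) (hl : 0 < l) (hF : 0 < F) :
    (∫ x, 1 / (F + x) ^ 2 ∂(expMeasure l)) =
      l * (1 / F - l * Real.exp (l * F) * ∫ t in Set.Ici (l * F), Real.exp (-t) / t) ∧
    (∫ x, 1 / (F + x) ^ 2 ∂(expMeasure l)) ≤
      (l ^ 2 * F + 2 * l) / (l ^ 2 * F ^ 3 + 4 * l * F ^ 2 + 2 * F) := by
  have hIci : (∫ t in Set.Ici (l*F), Real.exp (-t) / t) = ∫ t in Ioi (l*F), Real.exp (-t) / t :=
    integral_Ici_eq_integral_Ioi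
  have part1 : (∫ x, 1 / (F + x) ^ 2 ∂(expMeasure l)) =
      l * (1 / F - l * Real.exp (l * F) * ∫ t in Set.Ici (l * F), Real.exp (-t) / t) := by
    rw [step1 l F hl hF, step2 hl hF, step3 hl hF, hIci]
    ring
  refine ⟨part1, ?_⟩
  rw [part1, hIci]
  have hE := E1_lower (mul_pos hl hF)
  set E := ∫ t in Ioi (l*F), Real.exp (-t) / t with hEdef
  have hstep : l * (1 / F - l * Real.exp (l * F) * E) ≤
      l * (1 / F - l * Real.exp (l * F) *
        (Real.exp (-(l*F)) * (l*F+3) / ((l*F)^2+4*(l*F)+2))) := by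
    apply mul_le_mul_of_nonneg_left _ hl.le
    apply sub_le_sub_left
    exact mul_le_mul_of_nonneg_left hE (by positivity)
  refine hstep.trans (le_of_eq ?_)
  have d1 : (l*F)^2+4*(l*F)+2 ≠ 0 := by positivity
  have d2 : l^2*F^3+4*l*F^2+2*F ≠ 0 := by positivity
  rw [Real.exp_neg]
  field_simp
  ring
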